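/- Let G, H : ℝ≥0 → ℝ≥0 be continuous, strictly increasing, bounded functions with G(0) = H(0) = 0, G(s) < H(s) for all s > 0, and lim_{s→∞} H(s) > r := lim_{s→∞} G(s). Then there exist bounded functions ℓ₁, ℓ₂ of class K which are C¹ on (0, ∞) such that G(s) < ℓ₁(s) < ℓ₂(s) < H(s) for all s > 0 and r < lim_{t→∞} ℓ₁(t) ≤ lim_{t→∞} ℓ₂(t); in particular ℓ_i(s) < lim_{t→∞} ℓ_i(t) for all s ≥ 0 and i = 1, 2. -/

import Mathlib

open Filter Set

noncomputable section

/-- A function of class `K`: continuous, strictly increasing on `[0,∞)` and vanishing at `0`. -/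
def IsClassK (φ : ℝ → ℝ) : Prop :=
  ContinuousOn φ (Set.Ici 0) ∧ StrictMonoOn φ (Set.Ici 0) ∧ φ 0 = 0

open intervalIntegral MeasureTheory

/-- The construction (4.12): if `G, H : ℝ≥0 → ℝ≥0` are continuous, strictly increasing,
bounded, vanish at `0`, satisfy `G < H` on `(0,∞)` and `lim H > r := lim G`, then there are
bounded class-`K` functions `ℓ₁, ℓ₂`, `C¹` on `(0,∞)`, with `G < ℓ₁ < ℓ₂ < H` on `(0,∞)`
and `r < lim ℓ₁ ≤ lim ℓ₂`; in particular `ℓᵢ(s) < lim ℓᵢ` for all `s ≥ 0`. -/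

-- weak bounds for monotone functions
lemma int_le_const_mono {f : ℝ → ℝ} (hf : Monotone f) {a b : ℝ} (hab : a ≤ b) :
    (∫ t in a..b, f t) ≤ (b - a) * f b := by
  have h := intervalIntegral.integral_mono_on (μ := volume) hab
    ((hf.monotoneOn _).intervalIntegrable) (intervalIntegrable_const)
    (fun x hx => hf hx.2 : ∀ x ∈ Icc a b, f x ≤ f b)
  simpa [smul_eq_mul] using h

lemma const_le_int_mono {f : ℝ → ℝ} (hf : Monotone f) {a b : ℝ} (hab : a ≤ b) :
    (b - a) * f a ≤ (∫ t in a..b, f t) := by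
  have h := intervalIntegral.integral_mono_on (μ := volume) hab
    (intervalIntegrable_const) ((hf.monotoneOn _).intervalIntegrable)
    (fun x hx => hf hx.1 : ∀ x ∈ Icc a b, f a ≤ f x)
  simpa [smul_eq_mul] using h

-- strict bounds for continuous strictly monotone functions
lemma int_lt_const_strict {H : ℝ → ℝ} (hH : Continuous H) (hHm : StrictMonoOn H (Ici 0))
    {a b : ℝ} (ha : 0 ≤ a) (hab : a < b) :
    (∫ t in a..b, H t) < (b - a) * H b := by
  have h := intervalIntegral.integral_lt_integral_of_continuousOn_of_le_of_exists_lt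
    (f := H) (g := fun _ => H b) hab (hH.continuousOn) (continuousOn_const)
    (fun x hx => (hHm.monotoneOn (ha.trans hx.1.le) (ha.trans hab.le) hx.2 : H x ≤ H b))
    ⟨a, ⟨le_refl a, hab.le⟩, hHm ha (ha.trans hab.le) hab⟩
  simpa [smul_eq_mul] using h

lemma const_lt_int_strict {H : ℝ → ℝ} (hH : Continuous H) (hHm : StrictMonoOn H (Ici 0))
    {a b : ℝ} (ha : 0 ≤ a) (hab : a < b) :
    (b - a) * H a < (∫ t in a..b, H t) := by
  have h := intervalIntegral.integral_lt_integral_of_continuousOn_of_le_of_exists_lt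
    (f := fun _ => H a) (g := H) hab (continuousOn_const) (hH.continuousOn)
    (fun x hx => (hHm.monotoneOn ha (ha.trans hx.1.le) hx.1.le : H a ≤ H x))
    ⟨b, ⟨hab.le, le_refl b⟩, hHm ha (ha.trans hab.le) hab⟩
  simpa [smul_eq_mul] using h

lemma int_le_const_weak {H : ℝ → ℝ} (hHm : StrictMonoOn H (Ici 0)) (hH : Continuous H)
    {a b : ℝ} (ha : 0 ≤ a) (hab : a ≤ b) :
    (∫ t in a..b, H t) ≤ (b - a) * H b := by
  rcases eq_or_lt_of_le hab with rfl | h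
  · simp
  · exact (int_lt_const_strict hH hHm ha h).le

lemma const_le_int_weak {H : ℝ → ℝ} (hHm : StrictMonoOn H (Ici 0)) (hH : Continuous H)
    {a b : ℝ} (ha : 0 ≤ a) (hab : a ≤ b) :
    (b - a) * H a ≤ (∫ t in a..b, H t) := by
  rcases eq_or_lt_of_le hab with rfl | h
  · simp
  · exact (const_lt_int_strict hH hHm ha h).le

section Avg

variable {H : ℝ → ℝ}

-- weak shrink-left
lemma avg_shrink_left (hH : Continuous H) (hHm : StrictMonoOn H (Ici 0))
    {a a' b : ℝ} (ha : 0 ≤ a) (haa' : a ≤ a') (hab : a' < b) :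
    (∫ t in a..b, H t) / (b - a) ≤ (∫ t in a'..b, H t) / (b - a') := by
  have ha' : 0 ≤ a' := ha.trans haa'
  have h1 : (∫ t in a..b, H t) = (∫ t in a..a', H t) + (∫ t in a'..b, H t) :=
    (intervalIntegral.integral_add_adjacent_intervals
      (hH.intervalIntegrable _ _) (hH.intervalIntegrable _ _)).symm
  have h2 : (∫ t in a..a', H t) ≤ (a' - a) * H a' := int_le_const_weak hHm hH ha haa'
  have h3 : (b - a') * H a' ≤ (∫ t in a'..b, H t) := const_le_int_weak hHm hH ha' hab.le
  rw [div_le_div_iff₀ (by linarith) (by linarith)]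
  nlinarith [h2, h3]

-- strict shrink-left
lemma avg_shrink_left_strict (hH : Continuous H) (hHm : StrictMonoOn H (Ici 0))
    {a a' b : ℝ} (ha : 0 ≤ a) (haa' : a < a') (hab : a' < b) :
    (∫ t in a..b, H t) / (b - a) < (∫ t in a'..b, H t) / (b - a') := by
  have ha' : 0 ≤ a' := ha.trans haa'.le
  have h1 : (∫ t in a..b, H t) = (∫ t in a..a', H t) + (∫ t in a'..b, H t) :=
    (intervalIntegral.integral_add_adjacent_intervals
      (hH.intervalIntegrable _ _) (hH.intervalIntegrable _ _)).symm
  have h2 : (∫ t in a..a', H t) < (a' - a) * H a' := int_lt_const_strict hH hHm ha haa'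
  have h3 : (b - a') * H a' ≤ (∫ t in a'..b, H t) := const_le_int_weak hHm hH ha' hab.le
  rw [div_lt_div_iff₀ (by linarith) (by linarith)]
  nlinarith [h2, h3]

-- strict extend-right
lemma avg_extend_right_strict (hH : Continuous H) (hHm : StrictMonoOn H (Ici 0))
    {a b b' : ℝ} (ha : 0 ≤ a) (hab : a < b) (hbb' : b < b') :
    (∫ t in a..b, H t) / (b - a) < (∫ t in a..b', H t) / (b' - a) := by
  have hb : 0 ≤ b := ha.trans hab.le
  have h1 : (∫ t in a..b', H t) = (∫ t in a..b, H t) + (∫ t in b..b', H t) :=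
    (intervalIntegral.integral_add_adjacent_intervals
      (hH.intervalIntegrable _ _) (hH.intervalIntegrable _ _)).symm
  have h2 : (∫ t in a..b, H t) ≤ (b - a) * H b := int_le_const_weak hHm hH ha hab.le
  have h3 : (b' - b) * H b < (∫ t in b..b', H t) := const_lt_int_strict hH hHm hb hbb'
  rw [div_lt_div_iff₀ (by linarith) (by linarith)]
  nlinarith [h2, h3]

/-- Main strict comparison of sliding averages. -/
lemma avg_lt_avg (hH : Continuous H) (hHm : StrictMonoOn H (Ici 0))
    {a b a' b' : ℝ} (ha : 0 ≤ a) (haa' : a ≤ a') (hab : a < b) (ha'b' : a' < b')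
    (hbb' : b ≤ b') (hstrict : b < b' ∨ a < a') :
    (∫ t in a..b, H t) / (b - a) < (∫ t in a'..b', H t) / (b' - a') := by
  have ha' : 0 ≤ a' := ha.trans haa'
  rcases le_or_gt b a' with hba' | ha'b
  · -- disjoint-ish windows
    have hbb'' : b < b' := lt_of_le_of_lt hba' ha'b'
    have c1 : (∫ t in a..b, H t) / (b - a) ≤ H b := by
      rw [div_le_iff₀ (by linarith)]
      nlinarith [int_le_const_weak hHm hH ha hab.le]
    have c2 : H a' < (∫ t in a'..b', H t) / (b' - a') := by
      rw [lt_div_iff₀ (by linarith)]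
      nlinarith [const_lt_int_strict hH hHm ha' ha'b']
    have c3 : H b ≤ H a' := hHm.monotoneOn (ha.trans hab.le) ha' hba'
    linarith
  · rcases eq_or_lt_of_le hbb' with rfl | hbb''
    · have haa'' : a < a' := hstrict.resolve_left (lt_irrefl b)
      exact avg_shrink_left_strict hH hHm ha haa'' ha'b
    · calc (∫ t in a..b, H t) / (b - a) ≤ (∫ t in a'..b, H t) / (b - a') :=
            avg_shrink_left hH hHm ha haa' ha'b
        _ < (∫ t in a'..b', H t) / (b' - a') := avg_extend_right_strict hH hHm ha' ha'b hbb''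

/-- Weak comparison of sliding averages for a (merely) monotone function. -/
lemma avg_mono_of_monotone {f : ℝ → ℝ} (hf : Monotone f)
    {a b a' b' : ℝ} (haa' : a ≤ a') (hab : a < b) (ha'b' : a' < b') (hbb' : b ≤ b') :
    (∫ t in a..b, f t) / (b - a) ≤ (∫ t in a'..b', f t) / (b' - a') := by
  have hint : ∀ u v : ℝ, IntervalIntegrable f volume u v := fun u v =>
    (hf.monotoneOn _).intervalIntegrable
  rcases le_or_gt b a' with hba' | ha'b
  · have c1 : (∫ t in a..b, f t) / (b - a) ≤ f b := by
      rw [div_le_iff₀ (by linarith)]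
      nlinarith [int_le_const_mono hf hab.le]
    have c2 : f a' ≤ (∫ t in a'..b', f t) / (b' - a') := by
      rw [le_div_iff₀ (by linarith)]
      nlinarith [const_le_int_mono hf ha'b'.le]
    exact c1.trans ((hf hba').trans c2)
  · have step1 : (∫ t in a..b, f t) / (b - a) ≤ (∫ t in a'..b, f t) / (b - a') := by
      have h1 : (∫ t in a..b, f t) = (∫ t in a..a', f t) + (∫ t in a'..b, f t) :=
        (intervalIntegral.integral_add_adjacent_intervals (hint _ _) (hint _ _)).symm
      have h2 : (∫ t in a..a', f t) ≤ (a' - a) * f a' := int_le_const_mono hf haa'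
      have h3 : (b - a') * f a' ≤ (∫ t in a'..b, f t) := const_le_int_mono hf ha'b.le
      rw [div_le_div_iff₀ (by linarith) (by linarith)]
      nlinarith [h2, h3]
    have step2 : (∫ t in a'..b, f t) / (b - a') ≤ (∫ t in a'..b', f t) / (b' - a') := by
      rcases eq_or_lt_of_le hbb' with rfl | hbb''
      · exact le_refl _
      · have h1 : (∫ t in a'..b', f t) = (∫ t in a'..b, f t) + (∫ t in b..b', f t) :=
          (intervalIntegral.integral_add_adjacent_intervals (hint _ _) (hint _ _)).symm
        have h2 : (∫ t in a'..b, f t) ≤ (b - a') * f b := int_le_const_mono hf ha'b.le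
        have h3 : (b' - b) * f b ≤ (∫ t in b..b', f t) := const_le_int_mono hf hbb''.le
        rw [div_le_div_iff₀ (by linarith) (by linarith)]
        nlinarith [h2, h3]
    exact step1.trans step2

end Avg

lemma contDiffOn_one_of_hasDerivAt {f f' : ℝ → ℝ} {s : Set ℝ} (hs : IsOpen s)
    (hd : ∀ x ∈ s, HasDerivAt f (f' x) x) (hc : ContinuousOn f' s) :
    ContDiffOn ℝ 1 f s := by
  have : ContDiffOn ℝ (0 + 1) f s := by
    rw [contDiffOn_succ_iff_deriv_of_isOpen hs]
    refine ⟨fun x hx => (hd x hx).differentiableAt.differentiableWithinAt, by simp, ?_⟩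
    rw [contDiffOn_zero]
    exact ContinuousOn.congr hc fun x hx => (hd x hx).deriv
  simpa using this

/-- The sliding average of `H` over the window `[s - d s, s]`. -/
def ellF (H d : ℝ → ℝ) : ℝ → ℝ := fun s =>
  if 0 < s then (∫ t in (s - d s)..s, H t) / d s else 0

lemma core (H : ℝ → ℝ) (hH : Continuous H) (hHm : StrictMonoOn H (Ici 0)) (hH0 : H 0 = 0)
    (R : ℝ) (hHlim : Tendsto H atTop (nhds R)) (hR0 : 0 < R)
    (d : ℝ → ℝ) (hd : ∀ s, 0 < s → 0 < d s ∧ d s ≤ s / 2)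
    (hdC : ContDiffOn ℝ 1 d (Ioi 0))
    (hdD : ∀ s, 0 < s → ∃ D, HasDerivAt d D s ∧ D < 1) :
    IsClassK (ellF H d) ∧ ContDiffOn ℝ 1 (ellF H d) (Ioi 0) ∧
      (∀ s, 0 < s → H (s - d s) < ellF H d s ∧ ellF H d s < H s) ∧
      Tendsto (ellF H d) atTop (nhds R) ∧ (∀ s, 0 ≤ s → ellF H d s < R) := by
  have hMono := hHm.monotoneOn
  have hell0 : ellF H d 0 = 0 := if_neg (lt_irrefl 0)
  -- strict pointwise bounds
  have key : ∀ s, 0 < s → H (s - d s) < ellF H d s ∧ ellF H d s < H s := by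
    intro s hs
    obtain ⟨hd1, hd2⟩ := hd s hs
    have ha : (0:ℝ) ≤ s - d s := by linarith
    have hab : s - d s < s := by linarith
    have e : ellF H d s = (∫ t in (s - d s)..s, H t) / d s := if_pos hs
    have hlow := const_lt_int_strict hH hHm ha hab
    have hup := int_lt_const_strict hH hHm ha hab
    rw [show s - (s - d s) = d s by ring] at hlow hup
    constructor
    · rw [e, lt_div_iff₀ hd1]; linarith
    · rw [e, div_lt_iff₀ hd1]; linarith
  -- monotonicity of the left endpoint
  choose! D hD hD1 using hdD
  have hηmono : StrictMonoOn (fun s => s - d s) (Ioi 0) := by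
    apply strictMonoOn_of_deriv_pos (convex_Ioi 0)
      (continuousOn_id.sub hdC.continuousOn)
    intro x hx
    rw [interior_Ioi] at hx
    rw [((hasDerivAt_id x).sub (hD x hx)).deriv]
    linarith [hD1 x hx]
  -- strict monotonicity of ℓ for positive arguments
  have lmono : ∀ s s', 0 < s → s < s' → ellF H d s < ellF H d s' := by
    intro s s' hs hss'
    have hs' : 0 < s' := hs.trans hss'
    obtain ⟨hd1, hd2⟩ := hd s hs
    obtain ⟨hd1', hd2'⟩ := hd s' hs'
    have h := avg_lt_avg hH hHm (a := s - d s) (b := s) (a' := s' - d s') (b' := s')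
      (by linarith) (by have := hηmono (mem_Ioi.2 hs) (mem_Ioi.2 hs') hss'; exact this.le)
      (by linarith) (by linarith) hss'.le (Or.inl hss')
    rw [show s - (s - d s) = d s by ring, show s' - (s' - d s') = d s' by ring] at h
    simpa [ellF, if_pos hs, if_pos hs'] using h
  -- positivity
  have hellpos : ∀ t, 0 < t → 0 < ellF H d t := by
    intro t ht
    obtain ⟨hd1, hd2⟩ := hd t ht
    refine lt_of_le_of_lt ?_ (key t ht).1
    rw [← hH0]
    exact hMono (le_refl (0:ℝ)) (show (0:ℝ) ≤ t - d t by linarith) (by linarith)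
  -- smoothness
  have hPH : ∀ x : ℝ, HasDerivAt (fun x => ∫ t in (0:ℝ)..x, H t) (H x) x := fun x =>
    (hH.integral_hasStrictDerivAt 0 x).hasDerivAt
  have hPHC : ContDiffOn ℝ 1 (fun x => ∫ t in (0:ℝ)..x, H t) univ :=
    contDiffOn_one_of_hasDerivAt isOpen_univ (fun x _ => hPH x) hH.continuousOn
  have hell : ContDiffOn ℝ 1 (ellF H d) (Ioi 0) := by
    have hF : ContDiffOn ℝ 1
        (fun s => ((∫ t in (0:ℝ)..s, H t) - ∫ t in (0:ℝ)..(s - d s), H t) / d s) (Ioi 0) := by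
      apply ContDiffOn.div
      · exact (hPHC.comp contDiffOn_id (mapsTo_univ _ _)).sub
          (hPHC.comp (contDiffOn_id.sub hdC) (mapsTo_univ _ _))
      · exact hdC
      · exact fun x hx => (hd x hx).1.ne'
    apply hF.congr
    intro s hs
    rw [show ellF H d s = (∫ t in (s - d s)..s, H t) / d s from if_pos hs]
    congr 1
    exact (intervalIntegral.integral_interval_sub_left
      (hH.intervalIntegrable _ _) (hH.intervalIntegrable _ _)).symm
  -- continuity on [0, ∞)
  have hcont : ContinuousOn (ellF H d) (Ici 0) := by
    intro x hx
    rcases eq_or_lt_of_le (show (0:ℝ) ≤ x from hx) with hx0 | hx'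
    · subst hx0
      rw [ContinuousWithinAt, hell0]
      apply squeeze_zero' (f := ellF H d) (g := H) ?_ ?_ ?_
      · filter_upwards [self_mem_nhdsWithin] with t ht
        rcases eq_or_lt_of_le (show (0:ℝ) ≤ t from ht) with ht0 | ht'
        · rw [← ht0, hell0]
        · exact (hellpos t ht').le
      · filter_upwards [self_mem_nhdsWithin] with t ht
        rcases eq_or_lt_of_le (show (0:ℝ) ≤ t from ht) with ht0 | ht'
        · rw [← ht0, hell0, hH0]
        · exact (key t ht').2.le
      · have h := hH.tendsto 0
        rw [hH0] at h
        exact h.mono_left nhdsWithin_le_nhds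
    · exact ((hell.continuousOn.continuousAt (Ioi_mem_nhds hx')).continuousWithinAt)
  -- strict monotonicity on [0, ∞)
  have hsm : StrictMonoOn (ellF H d) (Ici 0) := by
    intro x hx y hy hxy
    rcases eq_or_lt_of_le (show (0:ℝ) ≤ x from hx) with hx0 | hx'
    · rw [← hx0, hell0]
      exact hellpos y (by rw [hx0]; exact hxy)
    · exact lmono x y hx' hxy
  -- limit at infinity
  have hηtop : Tendsto (fun s => s - d s) atTop atTop := by
    apply tendsto_atTop_mono' atTop ?_ (Tendsto.atTop_div_const two_pos tendsto_id)
    filter_upwards [eventually_gt_atTop 0] with s hs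
    have := (hd s hs).2
    simp only [id_eq]
    linarith
  have hlim : Tendsto (ellF H d) atTop (nhds R) := by
    apply tendsto_of_tendsto_of_tendsto_of_le_of_le' (hHlim.comp hηtop) hHlim
    · filter_upwards [eventually_gt_atTop 0] with s hs
      exact (key s hs).1.le
    · filter_upwards [eventually_gt_atTop 0] with s hs
      exact (key s hs).2.le
  -- upper bound by R
  have hHltR : ∀ x, 0 ≤ x → H x < R := by
    intro x hx
    have h1 : H (x + 1) ≤ R := by
      refine ge_of_tendsto hHlim ?_
      filter_upwards [eventually_ge_atTop (x + 1)] with y hy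
      exact hMono (by linarith : (0:ℝ) ≤ x + 1) (by linarith : (0:ℝ) ≤ y) hy
    exact lt_of_lt_of_le (hHm hx (by linarith : (0:ℝ) ≤ x + 1) (lt_add_one x)) h1
  have hbound : ∀ s, 0 ≤ s → ellF H d s < R := by
    intro s hs
    rcases eq_or_lt_of_le (hs : (0:ℝ) ≤ s) with hs0 | hs'
    · rw [← hs0, hell0]; exact hR0
    · exact (key s hs').2.trans (hHltR s hs)
  exact ⟨⟨hcont, hsm, hell0⟩, hell, key, hlim, hbound⟩

/-- Comparison of two sliding averages with nested windows. -/
lemma ellF_lt_ellF (H : ℝ → ℝ) (hH : Continuous H) (hHm : StrictMonoOn H (Ici 0))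
    (d₁ d₂ : ℝ → ℝ) (hd₁ : ∀ s, 0 < s → 0 < d₁ s ∧ d₁ s ≤ s / 2)
    (hd₂ : ∀ s, 0 < s → 0 < d₂ s) (h12 : ∀ s, 0 < s → d₂ s < d₁ s) :
    ∀ s, 0 < s → ellF H d₁ s < ellF H d₂ s := by
  intro s hs
  obtain ⟨h1, h2⟩ := hd₁ s hs
  have h3 := hd₂ s hs
  have h4 := h12 s hs
  have h := avg_lt_avg hH hHm (a := s - d₁ s) (b := s) (a' := s - d₂ s) (b' := s)
    (by linarith) (by linarith) (by linarith) (by linarith) (le_refl s) (Or.inr (by linarith))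
  rw [show s - (s - d₁ s) = d₁ s by ring, show s - (s - d₂ s) = d₂ s by ring] at h
  simpa [ellF, if_pos hs] using h

-- primed versions of constant bounds, for functions monotone on an interval only
lemma const_le_int_mono' {f : ℝ → ℝ} {a b : ℝ} (hab : a ≤ b) (hf : MonotoneOn f (Icc a b))
    (hfi : IntervalIntegrable f volume a b) :
    (b - a) * f a ≤ ∫ t in a..b, f t := by
  have h := intervalIntegral.integral_mono_on (μ := volume) hab intervalIntegrable_const hfi
    (fun x hx => hf (left_mem_Icc.2 hab) hx hx.1)
  simpa [smul_eq_mul] using h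

lemma int_le_const_mono' {f : ℝ → ℝ} {a b : ℝ} (hab : a ≤ b) (hf : MonotoneOn f (Icc a b))
    (hfi : IntervalIntegrable f volume a b) :
    (∫ t in a..b, f t) ≤ (b - a) * f b := by
  have h := intervalIntegral.integral_mono_on (μ := volume) hab hfi intervalIntegrable_const
    (fun x hx => hf hx (right_mem_Icc.2 hab) hx.2)
  simpa [smul_eq_mul] using h

lemma build_d (G H : ℝ → ℝ) (hG : Continuous G) (hH : Continuous H)
    (hHm : StrictMonoOn H (Ici 0)) (hGH : ∀ s, 0 < s → G s < H s)
    (r : ℝ) (hGr : ∀ s, 0 ≤ s → G s < r) (s₀ : ℝ) (hs₀ : 0 ≤ s₀) (hrs₀ : r < H s₀) :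
    ∃ d : ℝ → ℝ, (∀ s, 0 < s → 0 < d s ∧ d s ≤ s / 2) ∧
      ContDiffOn ℝ 1 d (Ioi 0) ∧ (∀ s, 0 < s → ∃ D, HasDerivAt d D s ∧ D < 1) ∧
      (∀ s, 0 < s → G s ≤ H (s - d s)) := by
  have hMono := hHm.monotoneOn
  set S : ℝ := s₀ + 1 with hS_def
  have hS : 0 < S := by linarith
  set K : ℝ → Set ℝ := fun s => {u | 0 ≤ u ∧ u ≤ s ∧ G s ≤ H (s - u)} with hK_def
  set g : ℝ → ℝ := fun s => sSup (K s) with hg_def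
  have hKbdd : ∀ s, BddAbove (K s) := fun s => ⟨s, fun x hx => hx.2.1⟩
  have hKne : ∀ s, 0 < s → (K s).Nonempty := fun s hs =>
    ⟨0, le_refl 0, hs.le, by simpa using (hGH s hs).le⟩
  have hKclosed : ∀ s, IsClosed (K s) := by
    intro s
    have : K s = {u : ℝ | 0 ≤ u} ∩ ({u | u ≤ s} ∩ {u | G s ≤ H (s - u)}) := by
      ext u; simp [hK_def, and_assoc]
    rw [this]
    exact (isClosed_le continuous_const continuous_id).inter
      ((isClosed_le continuous_id continuous_const).inter
        (isClosed_le continuous_const (hH.comp (continuous_const.sub continuous_id))))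
  have hgmem : ∀ s, 0 < s → g s ∈ K s := by
    intro s hs
    have hcpt : IsCompact (K s) :=
      isCompact_Icc.of_isClosed_subset (hKclosed s) (fun x hx => ⟨hx.1, hx.2.1⟩)
    exact hcpt.sSup_mem (hKne s hs)
  have hg_nonneg : ∀ s, 0 ≤ g s := fun s => Real.sSup_nonneg (fun x hx => hx.1)
  have hdown : ∀ s, 0 < s → ∀ u, 0 ≤ u → u ≤ g s → G s ≤ H (s - u) := by
    intro s hs u hu hug
    obtain ⟨hg0, hgs, hgH⟩ := hgmem s hs
    exact hgH.trans (hMono (show (0:ℝ) ≤ s - g s by linarith)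
      (show (0:ℝ) ≤ s - u by linarith) (by linarith))
  have hgpos : ∀ s, 0 < s → 0 < g s := by
    intro s hs
    have hco : ContinuousAt (fun u : ℝ => H (s - u)) 0 :=
      (hH.comp (continuous_const.sub continuous_id)).continuousAt
    have hev : ∀ᶠ u in nhds (0:ℝ), G s < H (s - u) := by
      have h0 : G s < H (s - 0) := by simpa using hGH s hs
      exact hco.eventually (eventually_gt_nhds h0)
    have hev' : ∀ᶠ u in nhds (0:ℝ), u < s := eventually_lt_nhds hs
    have hevent : ∀ᶠ u in nhdsWithin (0:ℝ) (Ioi 0), (G s < H (s - u) ∧ u < s) ∧ u ∈ Ioi (0:ℝ) :=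
      (((hev.and hev').filter_mono nhdsWithin_le_nhds).and self_mem_nhdsWithin)
    obtain ⟨u, ⟨hu1, hu2⟩, hu0⟩ := hevent.exists
    have : u ≤ g s := le_csSup (hKbdd s) ⟨le_of_lt hu0, hu2.le, hu1.le⟩
    exact lt_of_lt_of_le hu0 this
  set gh : ℝ → ℝ := fun s => min (g s) 1 with hgh_def
  have hgh_nonneg : ∀ s, 0 ≤ gh s := fun s => le_min (hg_nonneg s) zero_le_one
  have hghpos : ∀ s, 0 < s → 0 < gh s := fun s hs => lt_min (hgpos s hs) one_pos
  have hgh_le_one : ∀ s, gh s ≤ 1 := fun s => min_le_right _ _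
  -- lower semicontinuity
  have hlsc : ∀ t, 0 < t → ∀ c, c < gh t → ∀ᶠ t' in nhds t, c < gh t' := by
    intro t ht c hc
    rcases lt_or_ge c 0 with hc0 | hc0
    · exact Eventually.of_forall fun t' => lt_of_lt_of_le hc0 (hgh_nonneg t')
    · have hc1 : c < 1 := lt_of_lt_of_le hc (min_le_right _ _)
      have hcg : c < g t := lt_of_lt_of_le hc (min_le_left _ _)
      obtain ⟨hgt0, hgts, hgtH⟩ := hgmem t ht
      set c₂ : ℝ := (c + g t) / 2 with hc₂_def
      have h1 : c < c₂ := by rw [hc₂_def]; linarith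
      have h2 : c₂ < g t := by rw [hc₂_def]; linarith
      have h3 : 0 ≤ c₂ := by linarith
      have hstrict : G t < H (t - c₂) :=
        lt_of_le_of_lt hgtH (hHm (show (0:ℝ) ≤ t - g t by linarith)
          (show (0:ℝ) ≤ t - c₂ by linarith) (by linarith))
      have hopen : IsOpen {t' : ℝ | G t' < H (t' - c₂)} :=
        isOpen_lt hG (hH.comp (continuous_id.sub continuous_const))
      filter_upwards [hopen.mem_nhds hstrict,
        eventually_gt_nhds (show c₂ < t by linarith)] with t' ht1 ht2
      have : c₂ ≤ g t' := le_csSup (hKbdd t') ⟨h3, ht2.le, le_of_lt ht1⟩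
      exact lt_min (lt_of_lt_of_le h1 this) hc1
  -- positive lower bound on compact subintervals
  have heps : ∀ m, 0 < m → m ≤ S → ∃ ε, 0 < ε ∧ ∀ t ∈ Icc m S, ε ≤ gh t := by
    intro m hm hmS
    have hU : ∀ t ∈ Icc m S, {t' | gh t / 2 < gh t'} ∈ nhds t := by
      intro t htm
      have htpos : 0 < t := lt_of_lt_of_le hm htm.1
      exact hlsc t htpos _ (by linarith [hghpos t htpos])
    obtain ⟨F, hFmem, hFcov⟩ := isCompact_Icc.elim_nhds_subcover _ hU
    rcases Finset.eq_empty_or_nonempty F with rfl | hFne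
    · exfalso
      have := hFcov ⟨le_refl m, hmS⟩
      simpa using this
    · refine ⟨F.inf' hFne (fun t => gh t / 2), ?_, ?_⟩
      · rw [Finset.lt_inf'_iff]
        intro b hb
        have := hghpos b (lt_of_lt_of_le hm (hFmem b hb).1)
        linarith
      · intro t htm
        obtain ⟨x, hx, hxt⟩ := mem_iUnion₂.1 (hFcov htm)
        exact (Finset.inf'_le _ hx).trans (le_of_lt hxt)
  -- the monotone width function
  set δ : ℝ → ℝ := fun s => sInf (gh '' Icc (min s S) S) with hδ_def
  have himne : ∀ s : ℝ, (gh '' Icc (min s S) S).Nonempty :=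
    fun s => ⟨gh S, S, ⟨min_le_right s S, le_refl S⟩, rfl⟩
  have himbdd : ∀ s : ℝ, BddBelow (gh '' Icc (min s S) S) := by
    intro s
    refine ⟨0, fun y hy => ?_⟩
    obtain ⟨t, _, rfl⟩ := hy
    exact hgh_nonneg t
  have hδmono : Monotone δ := by
    intro s s' hss'
    exact csInf_le_csInf (himbdd s) (himne s')
      (image_mono (Icc_subset_Icc (min_le_min hss' (le_refl S)) (le_refl S)))
  have hδnonneg : ∀ s, 0 ≤ δ s := by
    intro s
    refine le_csInf (himne s) fun y hy => ?_
    obtain ⟨t, _, rfl⟩ := hy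
    exact hgh_nonneg t
  have hδpos : ∀ s, 0 < s → 0 < δ s := by
    intro s hs
    have hm : 0 < min s S := lt_min hs hS
    obtain ⟨ε, hε, hεle⟩ := heps (min s S) hm (min_le_right s S)
    refine lt_of_lt_of_le hε (le_csInf (himne s) fun y hy => ?_)
    obtain ⟨t, ht, rfl⟩ := hy
    exact hεle t ht
  have hδle : ∀ s, s ≤ S → δ s ≤ gh s :=
    fun s hsS => csInf_le (himbdd s) ⟨s, ⟨min_le_left s S, hsS⟩, rfl⟩
  have hδleS : ∀ s, δ s ≤ gh S :=
    fun s => csInf_le (himbdd s) ⟨S, ⟨min_le_right s S, le_refl S⟩, rfl⟩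
  -- the key transfer property
  have hδK : ∀ s, 0 < s → ∀ u, 0 ≤ u → u ≤ δ s → G s ≤ H (s - u) := by
    intro s hs u hu huδ
    rcases le_or_gt s S with hsS | hSs
    · exact hdown s hs u hu (huδ.trans ((hδle s hsS).trans (min_le_left _ _)))
    · have hu1 : u ≤ 1 := huδ.trans ((hδleS s).trans (min_le_right _ _))
      have hH1 : H s₀ ≤ H (s - u) :=
        hMono hs₀ (show (0:ℝ) ≤ s - u by linarith) (by linarith)
      exact le_of_lt (lt_of_lt_of_le ((hGr s hs.le).trans hrs₀) hH1)
  -- the doubly-averaged width function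
  set dh : ℝ → ℝ := fun t => min (δ t) t / 2 with hdh_def
  have hdhmono : Monotone dh := by
    intro x y hxy
    have h : min (δ x) x ≤ min (δ y) y := min_le_min (hδmono hxy) hxy
    simp only [hdh_def]
    linarith
  have hdhpos : ∀ t, 0 < t → 0 < dh t := fun t ht => by
    have := lt_min (hδpos t ht) ht
    simp only [hdh_def]; linarith
  have hdh_half : ∀ t, dh t ≤ t / 2 := fun t => by
    have := min_le_right (δ t) t
    simp only [hdh_def]; linarith
  have hdh_le_δ : ∀ t, dh t ≤ δ t := fun t => by
    have h1 := min_le_left (δ t) t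
    have h2 := hδnonneg t
    simp only [hdh_def]; linarith
  have hdhint : ∀ u v : ℝ, IntervalIntegrable dh volume u v :=
    fun u v => (hdhmono.monotoneOn _).intervalIntegrable
  set P : ℝ → ℝ := fun x => ∫ t in (1:ℝ)..x, dh t with hP_def
  have hPcont : Continuous P := intervalIntegral.continuous_primitive hdhint 1
  set av : ℝ → ℝ := fun s => (∫ t in (s/2)..s, dh t) / (s / 2) with hav_def
  have havP : ∀ s : ℝ, av s = (P s - P (s/2)) / (s/2) := by
    intro s
    simp only [hav_def, hP_def]
    congr 1
    exact (intervalIntegral.integral_interval_sub_left (hdhint 1 s) (hdhint 1 (s/2))).symm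
  have hav_cont : ContinuousOn av (Ioi 0) := by
    have hc : ContinuousOn (fun s : ℝ => (P s - P (s/2)) / (s/2)) (Ioi 0) := by
      refine ContinuousOn.div ?_ ?_ ?_
      · exact (hPcont.sub (hPcont.comp (continuous_id.div_const 2))).continuousOn
      · exact (continuous_id.div_const 2).continuousOn
      · intro x hx
        exact ne_of_gt (half_pos hx)
    exact hc.congr fun x _ => havP x
  have hav_lb : ∀ s, 0 < s → dh (s/2) ≤ av s := by
    intro s hs
    have h := const_le_int_mono' (a := s/2) (b := s) (by linarith)
      (hdhmono.monotoneOn _) (hdhint _ _)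
    rw [show s - s/2 = s/2 by ring] at h
    rw [hav_def]
    exact (le_div_iff₀ (half_pos hs)).2 (by linarith)
  have hav_ub : ∀ s, 0 < s → av s ≤ dh s := by
    intro s hs
    have h := int_le_const_mono' (a := s/2) (b := s) (by linarith)
      (hdhmono.monotoneOn _) (hdhint _ _)
    rw [show s - s/2 = s/2 by ring] at h
    rw [hav_def]
    exact (div_le_iff₀ (half_pos hs)).2 (by linarith)
  have hav_pos : ∀ s, 0 < s → 0 < av s :=
    fun s hs => lt_of_lt_of_le (hdhpos (s/2) (half_pos hs)) (hav_lb s hs)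
  have hav_mono : ∀ ⦃x y : ℝ⦄, 0 < x → x ≤ y → av x ≤ av y := by
    intro x y hx hxy
    rcases eq_or_lt_of_le hxy with rfl | h
    · exact le_refl _
    · have hcomp := avg_mono_of_monotone hdhmono (show x/2 ≤ y/2 by linarith)
        (show x/2 < x by linarith) (show y/2 < y by linarith) hxy
      rw [show x - x/2 = x/2 by ring, show y - y/2 = y/2 by ring] at hcomp
      exact hcomp
  have hav_int : ∀ u v : ℝ, 0 < u → 0 < v → IntervalIntegrable av volume u v := by
    intro u v hu hv
    refine (hav_cont.mono fun x hx => ?_).intervalIntegrable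
    exact lt_of_lt_of_le (lt_min hu hv) hx.1
  set Q : ℝ → ℝ := fun x => ∫ t in (1:ℝ)..x, av t with hQ_def
  have hQder : ∀ x, 0 < x → HasDerivAt Q (av x) x := by
    intro x hx
    exact intervalIntegral.integral_hasDerivAt_right (hav_int 1 x one_pos hx)
      (hav_cont.stronglyMeasurableAtFilter isOpen_Ioi x hx)
      (hav_cont.continuousAt (Ioi_mem_nhds hx))
  have hQcont : ContinuousOn Q (Ioi 0) :=
    fun x hx => ((hQder x hx).continuousAt).continuousWithinAt
  set d : ℝ → ℝ := fun s => (Q s - Q (s/2)) * (2/s) with hd_def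
  have hQdiff : ∀ s, 0 < s → Q s - Q (s/2) = ∫ t in (s/2)..s, av t := by
    intro s hs
    exact intervalIntegral.integral_interval_sub_left (hav_int 1 s one_pos hs)
      (hav_int 1 (s/2) one_pos (half_pos hs))
  have hIlow : ∀ s, 0 < s → s/2 * av (s/2) ≤ Q s - Q (s/2) := by
    intro s hs
    rw [hQdiff s hs]
    have h := const_le_int_mono' (a := s/2) (b := s) (by linarith)
      (fun u hu v hv huv => hav_mono (lt_of_lt_of_le (half_pos hs) hu.1) huv)
      (hav_int (s/2) s (half_pos hs) hs)
    rw [show s - s/2 = s/2 by ring] at h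
    exact h
  have hIup : ∀ s, 0 < s → Q s - Q (s/2) ≤ s/2 * av s := by
    intro s hs
    rw [hQdiff s hs]
    have h := int_le_const_mono' (a := s/2) (b := s) (by linarith)
      (fun u hu v hv huv => hav_mono (lt_of_lt_of_le (half_pos hs) hu.1) huv)
      (hav_int (s/2) s (half_pos hs) hs)
    rw [show s - s/2 = s/2 by ring] at h
    exact h
  have hd_pos : ∀ s, 0 < s → 0 < d s := by
    intro s hs
    have h1 : 0 < Q s - Q (s/2) :=
      lt_of_lt_of_le (mul_pos (half_pos hs) (hav_pos (s/2) (half_pos hs))) (hIlow s hs)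
    exact mul_pos h1 (by positivity)
  have hd_le_av : ∀ s, 0 < s → d s ≤ av s := by
    intro s hs
    have h := mul_le_mul_of_nonneg_right (hIup s hs) (show (0:ℝ) ≤ 2/s by positivity)
    have e : s/2 * av s * (2/s) = av s := by field_simp
    rw [e] at h
    exact h
  have hd_half : ∀ s, 0 < s → d s ≤ s/2 :=
    fun s hs => (hd_le_av s hs).trans ((hav_ub s hs).trans (hdh_half s))
  have hd_le_δ : ∀ s, 0 < s → d s ≤ δ s :=
    fun s hs => (hd_le_av s hs).trans ((hav_ub s hs).trans (hdh_le_δ s))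
  -- derivative of d
  set Df : ℝ → ℝ := fun s =>
    (av s - av (s/2) * (1/2)) * (2/s) + (Q s - Q (s/2)) * (-(2 / s^2)) with hDf_def
  have hdder : ∀ s ∈ Ioi (0:ℝ), HasDerivAt d (Df s) s := by
    intro s hs
    rw [mem_Ioi] at hs
    have h2 : HasDerivAt (fun s : ℝ => Q (s/2)) (av (s/2) * (1/2)) s := by
      have hid : HasDerivAt (fun s : ℝ => s / 2) (1/2) s := (hasDerivAt_id s).div_const 2
      simpa [Function.comp_def] using (hQder (s/2) (half_pos hs)).comp s hid
    have hu : HasDerivAt (fun s => Q s - Q (s/2)) (av s - av (s/2) * (1/2)) s :=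
      (hQder s hs).sub h2
    have hv : HasDerivAt (fun s : ℝ => 2/s) (-(2 / s^2)) s := by
      have h := (hasDerivAt_inv hs.ne').const_mul (2:ℝ)
      have heq : -(2/s^2) = 2 * -(s^2)⁻¹ := by field_simp
      rw [show (fun s:ℝ => 2/s) = (fun x:ℝ => 2 * x⁻¹) by funext x; rw [div_eq_mul_inv], heq]
      exact h
    exact hu.mul hv
  have hDflt : ∀ s, 0 < s → Df s < 1 := by
    intro s hs
    have hB : 0 < av (s/2) := hav_pos (s/2) (half_pos hs)
    have hA : av s ≤ s/2 := (hav_ub s hs).trans (hdh_half s)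
    have hI : s/2 * av (s/2) ≤ Q s - Q (s/2) := hIlow s hs
    have e : Df s = ((av s - av (s/2)/2)*2*s - (Q s - Q (s/2))*2)/s^2 := by
      rw [hDf_def]
      field_simp
      ring
    rw [e, div_lt_iff₀ (by positivity : (0:ℝ) < s^2)]
    nlinarith [mul_le_mul_of_nonneg_right hA hs.le, mul_pos hB hs]
  have hdC : ContDiffOn ℝ 1 d (Ioi 0) := by
    refine contDiffOn_one_of_hasDerivAt isOpen_Ioi hdder ?_
    have hhalf : ContinuousOn (fun s : ℝ => av (s/2)) (Ioi 0) :=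
      hav_cont.comp ((continuous_id.div_const 2).continuousOn)
        (fun x hx => mem_Ioi.2 (half_pos hx))
    have hQhalf : ContinuousOn (fun s : ℝ => Q (s/2)) (Ioi 0) :=
      hQcont.comp ((continuous_id.div_const 2).continuousOn)
        (fun x hx => mem_Ioi.2 (half_pos hx))
    refine ContinuousOn.add ?_ ?_
    · exact (hav_cont.sub (hhalf.mul continuousOn_const)).mul
        (continuousOn_const.div continuousOn_id (fun x hx => ne_of_gt hx))
    · refine (hQcont.sub hQhalf).mul ?_
      refine ContinuousOn.neg ?_
      exact continuousOn_const.div (continuous_pow 2).continuousOn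
        (fun x hx => pow_ne_zero 2 (ne_of_gt hx))
  refine ⟨d, fun s hs => ⟨hd_pos s hs, hd_half s hs⟩, hdC, ?_, ?_⟩
  · intro s hs
    exact ⟨Df s, hdder s hs, hDflt s hs⟩
  · intro s hs
    exact hδK s hs (d s) (hd_pos s hs).le (hd_le_δ s hs)

theorem squeeze_classK_construction (G H : ℝ → ℝ)
    (hGK : IsClassK G) (hHK : IsClassK H)
    (hGnonneg : ∀ s : ℝ, 0 ≤ s → 0 ≤ G s) (hHnonneg : ∀ s : ℝ, 0 ≤ s → 0 ≤ H s)
    (hGH : ∀ s : ℝ, 0 < s → G s < H s)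
    (hGbdd : ∃ M : ℝ, ∀ s : ℝ, 0 ≤ s → G s ≤ M)
    (hHbdd : ∃ M : ℝ, ∀ s : ℝ, 0 ≤ s → H s ≤ M)
    (r R : ℝ)
    (hGlim : Tendsto G atTop (nhds r))
    (hHlim : Tendsto H atTop (nhds R))
    (hrR : r < R) :
    ∃ ℓ₁ ℓ₂ : ℝ → ℝ,
      IsClassK ℓ₁ ∧ IsClassK ℓ₂ ∧
      ContDiffOn ℝ 1 ℓ₁ (Set.Ioi 0) ∧ ContDiffOn ℝ 1 ℓ₂ (Set.Ioi 0) ∧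
      (∀ s : ℝ, 0 < s → G s < ℓ₁ s ∧ ℓ₁ s < ℓ₂ s ∧ ℓ₂ s < H s) ∧
      ∃ R₁ R₂ : ℝ,
        Tendsto ℓ₁ atTop (nhds R₁) ∧ Tendsto ℓ₂ atTop (nhds R₂) ∧
        r < R₁ ∧ R₁ ≤ R₂ ∧
        (∀ s : ℝ, 0 ≤ s → ℓ₁ s < R₁ ∧ ℓ₂ s < R₂) := by
  obtain ⟨hGc, hGm, hG0⟩ := hGK
  obtain ⟨hHc, hHm, hH0⟩ := hHK
  set G' : ℝ → ℝ := fun s => G (max s 0) with hG'_def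
  set H' : ℝ → ℝ := fun s => H (max s 0) with hH'_def
  have hG'eq : ∀ s : ℝ, 0 ≤ s → G' s = G s := by
    intro s hs; simp only [hG'_def]; rw [max_eq_left hs]
  have hH'eq : ∀ s : ℝ, 0 ≤ s → H' s = H s := by
    intro s hs; simp only [hH'_def]; rw [max_eq_left hs]
  have hG'cont : Continuous G' :=
    hGc.comp_continuous (continuous_id.max continuous_const) (fun x => le_max_right x 0)
  have hH'cont : Continuous H' :=
    hHc.comp_continuous (continuous_id.max continuous_const) (fun x => le_max_right x 0)
  have hH'm : StrictMonoOn H' (Ici 0) := by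
    intro x hx y hy hxy
    rw [hH'eq x hx, hH'eq y hy]
    exact hHm hx hy hxy
  have hH'0 : H' 0 = 0 := by rw [hH'eq 0 (le_refl 0)]; exact hH0
  have hH'lim : Tendsto H' atTop (nhds R) := by
    apply hHlim.congr'
    filter_upwards [eventually_ge_atTop (0:ℝ)] with s hs
    exact (hH'eq s hs).symm
  have hG'H' : ∀ s, 0 < s → G' s < H' s := by
    intro s hs
    rw [hG'eq s hs.le, hH'eq s hs.le]
    exact hGH s hs
  have hr_nonneg : 0 ≤ r := by
    refine ge_of_tendsto hGlim ?_
    filter_upwards [eventually_ge_atTop (0:ℝ)] with s hs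
    exact hGnonneg s hs
  have hGler : ∀ s, 0 ≤ s → G s ≤ r := by
    intro s hs
    refine ge_of_tendsto hGlim ?_
    filter_upwards [eventually_ge_atTop s] with y hy
    exact hGm.monotoneOn hs (hs.trans hy) hy
  have hGr : ∀ s, 0 ≤ s → G' s < r := by
    intro s hs
    rw [hG'eq s hs]
    exact lt_of_lt_of_le (hGm hs (by linarith : (0:ℝ) ≤ s + 1) (lt_add_one s))
      (hGler (s+1) (by linarith))
  have hev : ∀ᶠ s in atTop, r < H s := hHlim.eventually (eventually_gt_nhds hrR)
  obtain ⟨s₀, hs₀0, hrs₀⟩ : ∃ s₀ : ℝ, 0 ≤ s₀ ∧ r < H s₀ :=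
    ((eventually_ge_atTop (0:ℝ)).and hev).exists
  have hrs₀' : r < H' s₀ := by rw [hH'eq s₀ hs₀0]; exact hrs₀
  obtain ⟨d, hd, hdC, hdD, hGd⟩ :=
    build_d G' H' hG'cont hH'cont hH'm hG'H' r hGr s₀ hs₀0 hrs₀'
  have hR0 : 0 < R := lt_of_le_of_lt hr_nonneg hrR
  set d₂ : ℝ → ℝ := fun s => d s / 2 with hd₂_def
  have hd₂ : ∀ s, 0 < s → 0 < d₂ s ∧ d₂ s ≤ s / 2 := by
    intro s hs
    obtain ⟨h1, h2⟩ := hd s hs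
    exact ⟨half_pos h1, by simp only [hd₂_def]; linarith⟩
  have hd₂C : ContDiffOn ℝ 1 d₂ (Ioi 0) := hdC.div_const 2
  have hd₂D : ∀ s, 0 < s → ∃ D, HasDerivAt d₂ D s ∧ D < 1 := by
    intro s hs
    obtain ⟨D, h1, h2⟩ := hdD s hs
    exact ⟨D/2, h1.div_const 2, by linarith⟩
  obtain ⟨hK1, hC1, hB1, hL1, hU1⟩ := core H' hH'cont hH'm hH'0 R hH'lim hR0 d hd hdC hdD
  obtain ⟨hK2, hC2, hB2, hL2, hU2⟩ := core H' hH'cont hH'm hH'0 R hH'lim hR0 d₂ hd₂ hd₂C hd₂D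
  refine ⟨ellF H' d, ellF H' d₂, hK1, hK2, hC1, hC2, ?_, R, R, hL1, hL2, hrR, le_refl R,
    fun s hs => ⟨hU1 s hs, hU2 s hs⟩⟩
  intro s hs
  refine ⟨?_, ?_, ?_⟩
  · calc G s = G' s := (hG'eq s hs.le).symm
      _ ≤ H' (s - d s) := hGd s hs
      _ < ellF H' d s := (hB1 s hs).1
  · exact ellF_lt_ellF H' hH'cont hH'm d d₂ hd (fun t ht => (hd₂ t ht).1)
      (fun t ht => by simp only [hd₂_def]; linarith [(hd t ht).1]) s hs
  · calc ellF H' d₂ s < H' s := (hB2 s hs).2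
      _ = H s := hH'eq s hs.le
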